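/- Let U be a 6-dimensional F_p-vector space (p an odd prime) with basis u₁,...,u₆, and let w = u₁∧u₂∧u₃ + u₃∧u₄∧u₅ + u₅∧u₆∧u₁ ∈ Λ³U. Define X_w = { x ∈ Λ²U* : ⟨⟨w, x∧y⟩⟩ = 0 for all y ∈ U* }. Then X_w = span{ u₁*∧u₂* − u₄*∧u₅*, u₂*∧u₃* − u₅*∧u₆*, u₁*∧u₄*, u₂*∧u₅*, u₃*∧u₆*, u₄*∧u₆*, u₃*∧u₄* + u₁*∧u₆*, u₂*∧u₄*, u₂*∧u₆* }; in particular dim X_w = 9. -/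

import Mathlib

open ExteriorAlgebra

/-- The standard pairing of a `d`-tuple of dual vectors against the exterior algebra:
on the degree-`d` component it is `w ↦ ⟨⟨w, f₁ ∧ ⋯ ∧ f_d⟩⟩ = det (fᵢ(uⱼ))`, and it
vanishes on the other graded components. -/
noncomputable def pairDual (F U : Type*) [Field F] [AddCommGroup U] [Module F U]
    (d : ℕ) (f : Fin d → Module.Dual F U) : ExteriorAlgebra F U →ₗ[F] F :=
  ExteriorAlgebra.liftAlternating
    (Pi.single d (Matrix.detRowAlternating.compLinearMap (LinearMap.pi f)))

/-- `pairDual` as an alternating map in the dual vectors. -/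
noncomputable def pairAlt (F U : Type*) [Field F] [AddCommGroup U] [Module F U] (d : ℕ) :
    (Module.Dual F U) [⋀^Fin d]→ₗ[F] (ExteriorAlgebra F U →ₗ[F] F) where
  toFun f := pairDual F U d f
  map_update_add' := by
    intro inst f i x y
    have hI : inst = instDecidableEqFin d := Subsingleton.elim _ _
    subst hI
    have hm : ∀ (z : Module.Dual F U) (v : Fin d → U),
        (Matrix.of fun j i' => (Function.update f i z) i' (v j)) =
          (Matrix.of fun j i' => f i' (v j)).updateCol i (fun j => z (v j)) := by
      intro z v
      ext j i'
      by_cases h : i' = i <;> simp [Matrix.updateCol_apply, Function.update, h]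
    have key : Matrix.detRowAlternating.compLinearMap
          (LinearMap.pi (Function.update f i (x + y)))
        = Matrix.detRowAlternating.compLinearMap (LinearMap.pi (Function.update f i x))
          + Matrix.detRowAlternating.compLinearMap (LinearMap.pi (Function.update f i y)) := by
      ext v
      simp only [AlternatingMap.compLinearMap_apply, AlternatingMap.add_apply]
      show (Matrix.of fun j i' => (Function.update f i (x + y)) i' (v j)).det
        = (Matrix.of fun j i' => (Function.update f i x) i' (v j)).det
          + (Matrix.of fun j i' => (Function.update f i y) i' (v j)).det
      rw [hm, hm, hm]
      exact Matrix.det_updateCol_add _ _ _ _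
    show pairDual F U d _ = pairDual F U d _ + pairDual F U d _
    unfold pairDual
    rw [key, Pi.single_add, map_add]
  map_update_smul' := by
    intro inst f i c x
    have hI : inst = instDecidableEqFin d := Subsingleton.elim _ _
    subst hI
    have hm : ∀ (z : Module.Dual F U) (v : Fin d → U),
        (Matrix.of fun j i' => (Function.update f i z) i' (v j)) =
          (Matrix.of fun j i' => f i' (v j)).updateCol i (fun j => z (v j)) := by
      intro z v
      ext j i'
      by_cases h : i' = i <;> simp [Matrix.updateCol_apply, Function.update, h]
    have key : Matrix.detRowAlternating.compLinearMap
          (LinearMap.pi (Function.update f i (c • x)))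
        = c • Matrix.detRowAlternating.compLinearMap (LinearMap.pi (Function.update f i x)) := by
      ext v
      simp only [AlternatingMap.compLinearMap_apply, AlternatingMap.smul_apply]
      show (Matrix.of fun j i' => (Function.update f i (c • x)) i' (v j)).det
        = c • (Matrix.of fun j i' => (Function.update f i x) i' (v j)).det
      rw [hm, hm]
      exact Matrix.det_updateCol_smul _ _ _ _
    show pairDual F U d _ = c • pairDual F U d _
    unfold pairDual
    rw [key, Pi.single_smul, map_smul]
  map_eq_zero_of_eq' := by
    intro f i j hf hij
    have key : Matrix.detRowAlternating.compLinearMap (LinearMap.pi f)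
        = (0 : U [⋀^Fin d]→ₗ[F] F) := by
      ext v
      simp only [AlternatingMap.compLinearMap_apply, AlternatingMap.zero_apply]
      show (Matrix.of fun k i' => f i' (v k)).det = 0
      exact Matrix.det_zero_of_column_eq hij
        (fun k => by rw [Matrix.of_apply, Matrix.of_apply, hf])
    show pairDual F U d f = 0
    unfold pairDual
    rw [key, Pi.single_zero, map_zero]

/-- The standard pairing `Λ U* × Λ U → F` (graded pieces of equal degree pair by the
determinant formula, distinct degrees pair to zero), as a linear map
`Λ U* →ₗ (Λ U →ₗ F)`. -/
noncomputable def pairing (F U : Type*) [Field F] [AddCommGroup U] [Module F U] :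
    ExteriorAlgebra F (Module.Dual F U) →ₗ[F] (ExteriorAlgebra F U →ₗ[F] F) :=
  ExteriorAlgebra.liftAlternating fun d => pairAlt F U d

set_option synthInstance.maxHeartbeats 1000000
set_option maxHeartbeats 4000000

section Aux

variable {F U : Type*} [Field F] [AddCommGroup U] [Module F U]

private theorem prod2' {M : Type*} [AddCommGroup M] [Module F M] (f : Fin 2 → M) :
    ι F (f 0) * ι F (f 1) = ιMulti F 2 f := by
  simp [ιMulti_apply, List.ofFn_succ, mul_assoc, Matrix.vecTail, Function.comp]

private theorem prod3' {M : Type*} [AddCommGroup M] [Module F M] (f : Fin 3 → M) :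
    ι F (f 0) * ι F (f 1) * ι F (f 2) = ιMulti F 3 f := by
  simp [ιMulti_apply, List.ofFn_succ, mul_assoc, Matrix.vecTail, Function.comp]

private theorem pair_eval' {d : ℕ} (g : Fin d → Module.Dual F U) (v : Fin d → U) :
    pairing F U (ιMulti F d g) (ιMulti F d v) = Matrix.det (Matrix.of fun j i => g i (v j)) := by
  rw [pairing, liftAlternating_apply_ιMulti]
  show pairDual F U d g _ = _
  rw [pairDual, liftAlternating_apply_ιMulti]
  simp [Matrix.detRowAlternating]
  rfl

private theorem pair3 (g0 g1 g2 : Module.Dual F U) (v0 v1 v2 : U) :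
    pairing F U (ι F g0 * ι F g1 * ι F g2) (ι F v0 * ι F v1 * ι F v2)
      = g0 v0 * g1 v1 * g2 v2 - g0 v0 * g2 v1 * g1 v2
        - g1 v0 * g0 v1 * g2 v2 + g1 v0 * g2 v1 * g0 v2
        + g2 v0 * g0 v1 * g1 v2 - g2 v0 * g1 v1 * g0 v2 := by
  rw [show ι F g0 * ι F g1 * ι F g2 = ιMulti F 3 ![g0,g1,g2] from prod3' ![g0,g1,g2],
      show ι F v0 * ι F v1 * ι F v2 = ιMulti F 3 ![v0,v1,v2] from prod3' ![v0,v1,v2],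
      pair_eval', Matrix.det_fin_three]
  simp [Matrix.of_apply]

private theorem pair2 (g0 g1 : Module.Dual F U) (v0 v1 : U) :
    pairing F U (ι F g0 * ι F g1) (ι F v0 * ι F v1)
      = g0 v0 * g1 v1 - g1 v0 * g0 v1 := by
  rw [show ι F g0 * ι F g1 = ιMulti F 2 ![g0,g1] from prod2' ![g0,g1],
      show ι F v0 * ι F v1 = ιMulti F 2 ![v0,v1] from prod2' ![v0,v1],
      pair_eval', Matrix.det_fin_two]
  simp [Matrix.of_apply]

private theorem mem2' (a b : Module.Dual F U) : ι F a * ι F b ∈ ⋀[F]^2 (Module.Dual F U) := by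
  rw [exteriorPower, pow_two]
  exact Submodule.mul_mem_mul (LinearMap.mem_range_self _ a) (LinearMap.mem_range_self _ b)

private theorem swap' (a b : Module.Dual F U) :
    ι F b * ι F a = -(ι F a * ι F b) := by
  have h := ι_sq_zero (R := F) (a + b)
  simp only [map_add, add_mul, mul_add, ι_sq_zero] at h
  linear_combination (norm := module) h

private theorem span15 (u : Module.Basis (Fin 6) F U) :
    ⋀[F]^2 (Module.Dual F U) ≤ Submodule.span F
      (Set.range fun t : Fin 6 × Fin 6 => ι F (u.coord t.1) * ι F (u.coord t.2)) := by
  rw [exteriorPower, pow_two, Submodule.mul_le]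
  rintro _ ⟨a, rfl⟩ _ ⟨b, rfl⟩
  rw [← u.sum_dual_apply_smul_coord a, ← u.sum_dual_apply_smul_coord b]
  rw [map_sum, map_sum, Finset.sum_mul_sum]
  apply Submodule.sum_mem
  intro i _
  apply Submodule.sum_mem
  intro j _
  rw [map_smul, map_smul, smul_mul_assoc, mul_smul_comm]
  exact Submodule.smul_mem _ _ (Submodule.smul_mem _ _ (Submodule.subset_span ⟨(i, j), rfl⟩))

end Aux
set_option synthInstance.maxHeartbeats 1000000 in
/-- Let `U` be a 6-dimensional `F_p`-vector space (`p` odd) and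
`w = u₁∧u₂∧u₃ + u₃∧u₄∧u₅ + u₅∧u₆∧u₁ ∈ Λ³U`.  With
`X_w = { x ∈ Λ²U* : ⟨⟨w, x∧y⟩⟩ = 0 for all y ∈ U* }`, we have
`X_w = span{u₁*∧u₂* − u₄*∧u₅*, u₂*∧u₃* − u₅*∧u₆*, u₁*∧u₄*, u₂*∧u₅*, u₃*∧u₆*, u₄*∧u₆*,
u₃*∧u₄* + u₁*∧u₆*, u₂*∧u₄*, u₂*∧u₆*}`; in particular `dim X_w = 9`. -/
theorem stmt_18 (p : ℕ) [Fact p.Prime] (hp2 : p ≠ 2)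
    (U : Type*) [AddCommGroup U] [Module (ZMod p) U] (u : Module.Basis (Fin 6) (ZMod p) U) :
    let F := ZMod p
    let e : Fin 6 → ExteriorAlgebra F U := fun i => ι F (u i)
    let w := e 0 * e 1 * e 2 + e 2 * e 3 * e 4 + e 4 * e 5 * e 0
    let ι' : Module.Dual F U → ExteriorAlgebra F (Module.Dual F U) := ι F
    let Xw : Set (ExteriorAlgebra F (Module.Dual F U)) :=
      {x | x ∈ ⋀[F]^2 (Module.Dual F U) ∧
        ∀ y : Module.Dual F U, pairing F U (x * ι' y) w = 0}
    let B : Submodule F (ExteriorAlgebra F (Module.Dual F U)) :=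
      Submodule.span F
        {ι' (u.coord 0) * ι' (u.coord 1) - ι' (u.coord 3) * ι' (u.coord 4),
         ι' (u.coord 1) * ι' (u.coord 2) - ι' (u.coord 4) * ι' (u.coord 5),
         ι' (u.coord 0) * ι' (u.coord 3),
         ι' (u.coord 1) * ι' (u.coord 4),
         ι' (u.coord 2) * ι' (u.coord 5),
         ι' (u.coord 3) * ι' (u.coord 5),
         ι' (u.coord 2) * ι' (u.coord 3) + ι' (u.coord 0) * ι' (u.coord 5),
         ι' (u.coord 1) * ι' (u.coord 3),
         ι' (u.coord 1) * ι' (u.coord 5)}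
    Xw = ↑B ∧ Module.finrank F B = 9 := by
  intro F e w ι' Xw B
  have hds : ∀ i j : Fin 6, u.coord i (u j) = if i = j then 1 else 0 := by
    intro i j
    simp [Module.Basis.coord_apply, Module.Basis.repr_self, Finsupp.single_apply, eq_comm]
  constructor
  · ext x
    simp only [Xw, Set.mem_setOf_eq, SetLike.mem_coe]
    constructor
    · rintro ⟨hx2, hcond⟩
      obtain ⟨α, hα⟩ := (Submodule.mem_span_range_iff_exists_fun F).mp (span15 u hx2)
      have hc0 := hcond (u.coord 0)
      have hc1 := hcond (u.coord 1)
      have hc2 := hcond (u.coord 2)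
      have hc3 := hcond (u.coord 3)
      have hc4 := hcond (u.coord 4)
      have hc5 := hcond (u.coord 5)
      rw [← hα, Finset.sum_mul] at hc0 hc1 hc2 hc3 hc4 hc5
      simp only [ι', w, e, smul_mul_assoc, map_sum, map_smul, LinearMap.sum_apply,
        LinearMap.smul_apply, map_add, pair3, hds] at hc0 hc1 hc2 hc3 hc4 hc5
      simp only [Fintype.sum_prod_type, Fin.sum_univ_six] at hc0 hc1 hc2 hc3 hc4 hc5
      simp at hc0 hc1 hc2 hc3 hc4 hc5
      have h0 : α (1,2) - α (2,1) + α (4,5) - α (5,4) = 0 := by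
        first | linear_combination hc0 | linear_combination -hc0
      have h1 : α (0,2) - α (2,0) = 0 := by
        first | linear_combination hc1 | linear_combination -hc1
      have h2 : α (0,1) - α (1,0) + α (3,4) - α (4,3) = 0 := by
        first | linear_combination hc2 | linear_combination -hc2
      have h3 : α (2,4) - α (4,2) = 0 := by
        first | linear_combination hc3 | linear_combination -hc3
      have h4 : α (2,3) - α (3,2) - (α (0,5) - α (5,0)) = 0 := by
        first | linear_combination hc4 | linear_combination -hc4
      have h5 : α (0,4) - α (4,0) = 0 := by
        first | linear_combination hc5 | linear_combination -hc5
      have hkey : x =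
          (α (0,1) - α (1,0)) • (ι' (u.coord 0) * ι' (u.coord 1) - ι' (u.coord 3) * ι' (u.coord 4))
        + (α (1,2) - α (2,1)) • (ι' (u.coord 1) * ι' (u.coord 2) - ι' (u.coord 4) * ι' (u.coord 5))
        + (α (0,3) - α (3,0)) • (ι' (u.coord 0) * ι' (u.coord 3))
        + (α (1,4) - α (4,1)) • (ι' (u.coord 1) * ι' (u.coord 4))
        + (α (2,5) - α (5,2)) • (ι' (u.coord 2) * ι' (u.coord 5))
        + (α (3,5) - α (5,3)) • (ι' (u.coord 3) * ι' (u.coord 5))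
        + (α (2,3) - α (3,2)) • (ι' (u.coord 2) * ι' (u.coord 3) + ι' (u.coord 0) * ι' (u.coord 5))
        + (α (1,3) - α (3,1)) • (ι' (u.coord 1) * ι' (u.coord 3))
        + (α (1,5) - α (5,1)) • (ι' (u.coord 1) * ι' (u.coord 5)) := by
        rw [← hα]
        simp only [ι', Fintype.sum_prod_type, Fin.sum_univ_six]
        rw [swap' (u.coord 0) (u.coord 1), swap' (u.coord 0) (u.coord 2),
          swap' (u.coord 0) (u.coord 3), swap' (u.coord 0) (u.coord 4),
          swap' (u.coord 0) (u.coord 5), swap' (u.coord 1) (u.coord 2),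
          swap' (u.coord 1) (u.coord 3), swap' (u.coord 1) (u.coord 4),
          swap' (u.coord 1) (u.coord 5), swap' (u.coord 2) (u.coord 3),
          swap' (u.coord 2) (u.coord 4), swap' (u.coord 2) (u.coord 5),
          swap' (u.coord 3) (u.coord 4), swap' (u.coord 3) (u.coord 5),
          swap' (u.coord 4) (u.coord 5),
          ι_sq_zero (u.coord 0), ι_sq_zero (u.coord 1), ι_sq_zero (u.coord 2),
          ι_sq_zero (u.coord 3), ι_sq_zero (u.coord 4), ι_sq_zero (u.coord 5)]
        match_scalars
        any_goals ring
        · linear_combination h1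
        · linear_combination h5
        · linear_combination -h4
        · linear_combination h3
        · linear_combination h2
        · linear_combination h0
      rw [hkey]
      have hsub : ∀ z ∈ ({ι' (u.coord 0) * ι' (u.coord 1) - ι' (u.coord 3) * ι' (u.coord 4),
         ι' (u.coord 1) * ι' (u.coord 2) - ι' (u.coord 4) * ι' (u.coord 5),
         ι' (u.coord 0) * ι' (u.coord 3),
         ι' (u.coord 1) * ι' (u.coord 4),
         ι' (u.coord 2) * ι' (u.coord 5),
         ι' (u.coord 3) * ι' (u.coord 5),
         ι' (u.coord 2) * ι' (u.coord 3) + ι' (u.coord 0) * ι' (u.coord 5),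
         ι' (u.coord 1) * ι' (u.coord 3),
         ι' (u.coord 1) * ι' (u.coord 5)} : Set (ExteriorAlgebra F (Module.Dual F U))), z ∈ B :=
        fun z hz => Submodule.subset_span hz
      refine Submodule.add_mem _ (Submodule.add_mem _ (Submodule.add_mem _ (Submodule.add_mem _
        (Submodule.add_mem _ (Submodule.add_mem _ (Submodule.add_mem _ (Submodule.add_mem _
        (Submodule.smul_mem _ _ ?_) (Submodule.smul_mem _ _ ?_)) (Submodule.smul_mem _ _ ?_))
        (Submodule.smul_mem _ _ ?_)) (Submodule.smul_mem _ _ ?_)) (Submodule.smul_mem _ _ ?_))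
        (Submodule.smul_mem _ _ ?_)) (Submodule.smul_mem _ _ ?_)) (Submodule.smul_mem _ _ ?_)
      all_goals apply hsub; simp
    · intro hxB
      have key : ∀ z ∈ B, z ∈ ⋀[F]^2 (Module.Dual F U) ∧
          ∀ y, pairing F U (z * ι' y) w = 0 := by
        intro z hz
        induction hz using Submodule.span_induction with
        | mem a ha =>
          simp only [Set.mem_insert_iff, Set.mem_singleton_iff] at ha
          have cond : ∀ z : ExteriorAlgebra F (Module.Dual F U),
              (∀ y, pairing F U (z * ι' y) w = 0) = (∀ y, pairing F U (z * ι' y) w = 0) :=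
            fun _ => rfl
          rcases ha with rfl|rfl|rfl|rfl|rfl|rfl|rfl|rfl|rfl
          · refine ⟨Submodule.sub_mem _ (mem2' _ _) (mem2' _ _), fun y => ?_⟩
            simp only [ι', w, e, sub_mul, map_sub, map_add, LinearMap.sub_apply, pair3, hds]
            simp
          · refine ⟨Submodule.sub_mem _ (mem2' _ _) (mem2' _ _), fun y => ?_⟩
            simp only [ι', w, e, sub_mul, map_sub, map_add, LinearMap.sub_apply, pair3, hds]
            simp
          · refine ⟨mem2' _ _, fun y => ?_⟩
            simp only [ι', w, e, map_add, pair3, hds]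
            simp
          · refine ⟨mem2' _ _, fun y => ?_⟩
            simp only [ι', w, e, map_add, pair3, hds]
            simp
          · refine ⟨mem2' _ _, fun y => ?_⟩
            simp only [ι', w, e, map_add, pair3, hds]
            simp
          · refine ⟨mem2' _ _, fun y => ?_⟩
            simp only [ι', w, e, map_add, pair3, hds]
            simp
          · refine ⟨Submodule.add_mem _ (mem2' _ _) (mem2' _ _), fun y => ?_⟩
            simp only [ι', w, e, add_mul, map_add, LinearMap.add_apply, pair3, hds]
            simp
          · refine ⟨mem2' _ _, fun y => ?_⟩
            simp only [ι', w, e, map_add, pair3, hds]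
            simp
          · refine ⟨mem2' _ _, fun y => ?_⟩
            simp only [ι', w, e, map_add, pair3, hds]
            simp
        | zero => exact ⟨Submodule.zero_mem _, fun y => by rw [zero_mul, map_zero, LinearMap.zero_apply]⟩
        | add a b _ _ iha ihb =>
          exact ⟨Submodule.add_mem _ iha.1 ihb.1, fun y => by
            rw [add_mul, map_add (pairing F U) (a * ι' y) (b * ι' y), LinearMap.add_apply, iha.2 y, ihb.2 y, add_zero]⟩
        | smul c a _ iha =>
          exact ⟨Submodule.smul_mem _ _ iha.1, fun y => by
            rw [smul_mul_assoc, map_smul, LinearMap.smul_apply, iha.2 y, smul_zero]⟩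
      exact key x hxB
  · have hli : LinearIndependent F
        (![ι' (u.coord 0) * ι' (u.coord 1) - ι' (u.coord 3) * ι' (u.coord 4),
           ι' (u.coord 1) * ι' (u.coord 2) - ι' (u.coord 4) * ι' (u.coord 5),
           ι' (u.coord 0) * ι' (u.coord 3),
           ι' (u.coord 1) * ι' (u.coord 4),
           ι' (u.coord 2) * ι' (u.coord 5),
           ι' (u.coord 3) * ι' (u.coord 5),
           ι' (u.coord 2) * ι' (u.coord 3) + ι' (u.coord 0) * ι' (u.coord 5),
           ι' (u.coord 1) * ι' (u.coord 3),
           ι' (u.coord 1) * ι' (u.coord 5)] :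
          Fin 9 → ExteriorAlgebra F (Module.Dual F U)) := by
      rw [Fintype.linearIndependent_iff]
      intro c hc m
      have h01 := congrArg (fun z => pairing F U z (e 0 * e 1)) hc
      have h12 := congrArg (fun z => pairing F U z (e 1 * e 2)) hc
      have h03 := congrArg (fun z => pairing F U z (e 0 * e 3)) hc
      have h14 := congrArg (fun z => pairing F U z (e 1 * e 4)) hc
      have h25 := congrArg (fun z => pairing F U z (e 2 * e 5)) hc
      have h35 := congrArg (fun z => pairing F U z (e 3 * e 5)) hc
      have h23 := congrArg (fun z => pairing F U z (e 2 * e 3)) hc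
      have h13 := congrArg (fun z => pairing F U z (e 1 * e 3)) hc
      have h15 := congrArg (fun z => pairing F U z (e 1 * e 5)) hc
      simp only [ι', e, Fin.sum_univ_succ, Fin.sum_univ_zero, Matrix.cons_val_zero,
        Matrix.cons_val_succ, map_sum, map_add, map_smul, map_sub, map_zero,
        LinearMap.add_apply, LinearMap.sum_apply, LinearMap.smul_apply, LinearMap.sub_apply,
        LinearMap.zero_apply, pair2, hds] at h01 h12 h03 h14 h25 h35 h23 h13 h15
      simp at h01 h12 h03 h14 h25 h35 h23 h13 h15
      fin_cases m
      · first | exact h01 | simpa using h01 | linear_combination h01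
      · first | exact h12 | simpa using h12 | linear_combination h12
      · first | exact h03 | simpa using h03 | linear_combination h03
      · first | exact h14 | simpa using h14 | linear_combination h14
      · first | exact h25 | simpa using h25 | linear_combination h25
      · first | exact h35 | simpa using h35 | linear_combination h35
      · first | exact h23 | simpa using h23 | linear_combination h23
      · first | exact h13 | simpa using h13 | linear_combination h13
      · first | exact h15 | simpa using h15 | linear_combination h15
    have hB : B = Submodule.span F (Set.range
        (![ι' (u.coord 0) * ι' (u.coord 1) - ι' (u.coord 3) * ι' (u.coord 4),
           ι' (u.coord 1) * ι' (u.coord 2) - ι' (u.coord 4) * ι' (u.coord 5),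
           ι' (u.coord 0) * ι' (u.coord 3),
           ι' (u.coord 1) * ι' (u.coord 4),
           ι' (u.coord 2) * ι' (u.coord 5),
           ι' (u.coord 3) * ι' (u.coord 5),
           ι' (u.coord 2) * ι' (u.coord 3) + ι' (u.coord 0) * ι' (u.coord 5),
           ι' (u.coord 1) * ι' (u.coord 3),
           ι' (u.coord 1) * ι' (u.coord 5)] :
          Fin 9 → ExteriorAlgebra F (Module.Dual F U))) := by
      congr 1
      simp only [Matrix.range_cons, Matrix.range_empty, Set.singleton_union, Set.union_empty]
      rfl
    rw [hB, finrank_span_eq_card hli, Fintype.card_fin]
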